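/- Let x_1, ..., x_p in R^m be the positive samples and y_1, ..., y_q in R^m the negative samples, let l : R -> R be a surrogate function (convex, nonnegative, nondecreasing, with l(0) = 1), let lambda >= 0, and let k be an integer with 1 <= k <= q. Then the TopPushK objective f(w) = (1/p) * sum_{i=1}^p l(t(w) - <w, x_i>) + (lambda/2) * ||w||^2, where t(w) is the mean of the k largest values among <w, y_1>, ..., <w, y_q>, is a convex function of w. (For k = 1 this is the convexity of the TopPush objective; applied to all samples with k = n*tau it gives convexity of the TopMean and TopMean-NP objectives.) -/

import Mathlib

open scoped InnerProductSpace

/-- The sum of the `k` largest elements of a finite multiset of reals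
(counted with multiplicity). -/
noncomputable def sumTopK (s : Multiset ℝ) (k : ℕ) : ℝ :=
  ((s.sort (· ≤ ·)).drop (Multiset.card s - k)).sum

/-- The mean of the `k` largest elements of a finite multiset of reals. -/
noncomputable def meanTopK (s : Multiset ℝ) (k : ℕ) : ℝ :=
  sumTopK s k / k

/-- Any submultiset sum is at most the sum of the corresponding top elements
of a sorted list. -/
lemma sum_le_drop_sum : ∀ (L : List ℝ), L.Pairwise (· ≤ ·) →
    ∀ t : Multiset ℝ, t ≤ (L : Multiset ℝ) →
    t.sum ≤ (L.drop (L.length - Multiset.card t)).sum := by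
  intro L
  induction L with
  | nil =>
    intro _ t ht
    have h0 : t = 0 := Multiset.le_zero.mp (by simpa using ht)
    simp [h0]
  | cons a L ih =>
    intro hs t ht
    have hsL : L.Pairwise (· ≤ ·) := hs.of_cons
    have haL : ∀ b ∈ L, a ≤ b := (List.pairwise_cons.mp hs).1
    have hcard : Multiset.card t ≤ L.length + 1 := by
      simpa using Multiset.card_le_card ht
    by_cases hfull : Multiset.card t = L.length + 1
    · have heq : t = ((a :: L : List ℝ) : Multiset ℝ) :=
        Multiset.eq_of_le_of_card_le ht (by simp [hfull])
      simp [heq]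
    · have hle : Multiset.card t ≤ L.length := by omega
      by_cases ha : a ∈ t
      · have hc1 : 1 ≤ Multiset.card t := Multiset.card_pos.mpr (by
          intro h0; rw [h0] at ha; simp at ha)
        have ht' : t.erase a ≤ (L : Multiset ℝ) := by
          have h := Multiset.erase_le_erase a ht
          simpa using h
        have hct' : Multiset.card (t.erase a) = Multiset.card t - 1 :=
          Multiset.card_erase_of_mem ha
        have ihh := ih hsL (t.erase a) ht'
        rw [hct'] at ihh
        have hd : L.length - (Multiset.card t - 1) = (L.length - Multiset.card t) + 1 := by
          omega
        rw [hd] at ihh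
        have hlt : L.length - Multiset.card t < L.length := by omega
        have hdrop : L.drop (L.length - Multiset.card t)
            = L[L.length - Multiset.card t] :: L.drop (L.length - Multiset.card t + 1) :=
          List.drop_eq_getElem_cons hlt
        have hget : a ≤ L[L.length - Multiset.card t] := haL _ (List.getElem_mem _)
        have hsum : t.sum = a + (t.erase a).sum := by
          conv_lhs => rw [← Multiset.cons_erase ha]
          rw [Multiset.sum_cons]
        have hidx : (a :: L).length - Multiset.card t
            = (L.length - Multiset.card t) + 1 := by simp; omega
        rw [hidx, List.drop_succ_cons, hdrop, List.sum_cons, hsum]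
        linarith
      · have htL : t ≤ (L : Multiset ℝ) := by
          rw [Multiset.le_iff_count]
          intro b
          have hb := Multiset.le_iff_count.mp ht b
          rw [show ((a :: L : List ℝ) : Multiset ℝ) = a ::ₘ (L : Multiset ℝ) from rfl] at hb
          by_cases hba : b = a
          · simp [hba, Multiset.count_eq_zero_of_notMem ha]
          · rwa [Multiset.count_cons_of_ne hba] at hb
        have ihh := ih hsL t htL
        have hidx : (a :: L).length - Multiset.card t
            = (L.length - Multiset.card t) + 1 := by simp; omega
        rw [hidx, List.drop_succ_cons]
        exact ihh

lemma exists_le_map' {α β : Type*} {f : α → β} [DecidableEq β] :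
    ∀ {s : Multiset α} {t : Multiset β}, t ≤ s.map f → ∃ u, u ≤ s ∧ u.map f = t := by
  intro s
  induction s using Multiset.induction_on with
  | empty =>
    intro t ht
    have h0 : t = 0 := Multiset.le_zero.mp (by simpa using ht)
    exact ⟨0, le_rfl, by simp [h0]⟩
  | cons a s ih =>
    intro t ht
    by_cases hfa : f a ∈ t
    · have h1 : t.erase (f a) ≤ s.map f := by
        have h := Multiset.erase_le_erase (f a) ht
        simpa using h
      obtain ⟨u, hu, hmap⟩ := ih h1
      exact ⟨a ::ₘ u, Multiset.cons_le_cons a hu, by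
        rw [Multiset.map_cons, hmap, Multiset.cons_erase hfa]⟩
    · have h1 : t ≤ s.map f := by
        rw [Multiset.le_iff_count]
        intro b
        have hb := Multiset.le_iff_count.mp ht b
        rw [Multiset.map_cons] at hb
        by_cases hba : b = f a
        · simp [hba, Multiset.count_eq_zero_of_notMem hfa]
        · rwa [Multiset.count_cons_of_ne hba] at hb
      obtain ⟨u, hu, hmap⟩ := ih h1
      exact ⟨u, le_trans hu (Multiset.le_cons_self _ _), hmap⟩

lemma sumTopK_eq_sup' {q : ℕ} (f : Fin q → ℝ) {k : ℕ} (hkq : k ≤ q)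
    (hne : (Finset.powersetCard k (Finset.univ : Finset (Fin q))).Nonempty) :
    sumTopK (Multiset.map f Finset.univ.val) k =
      (Finset.powersetCard k (Finset.univ : Finset (Fin q))).sup' hne
        (fun S => ∑ j ∈ S, f j) := by
  classical
  set s : Multiset ℝ := Multiset.map f (Finset.univ.val : Multiset (Fin q)) with hsdef
  have hcs : Multiset.card s = q := by simp [hsdef]
  set L : List ℝ := s.sort (· ≤ ·) with hLdef
  have hLs : (L : Multiset ℝ) = s := Multiset.sort_eq _ _
  have hlen : L.length = q := by rw [hLdef, Multiset.length_sort, hcs]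
  have hsumTopK : sumTopK s k = (L.drop (q - k)).sum := by
    rw [sumTopK, hcs]
  apply le_antisymm
  · -- sumTopK ≤ sup'
    set t₀ : Multiset ℝ := ((L.drop (q - k) : List ℝ) : Multiset ℝ) with ht₀def
    have ht₀ : t₀ ≤ s := by
      rw [← hLs]
      exact Multiset.coe_le.mpr (List.drop_sublist _ _).subperm
    have hct₀ : Multiset.card t₀ = k := by
      rw [ht₀def, Multiset.coe_card, List.length_drop, hlen]; omega
    obtain ⟨u, hu, hmap⟩ := exists_le_map' (f := f)
      (s := (Finset.univ.val : Multiset (Fin q))) (t := t₀) ht₀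
    have hnd : u.Nodup := Multiset.nodup_of_le hu (Finset.univ.nodup)
    set S : Finset (Fin q) := ⟨u, hnd⟩ with hSdef
    have hScard : S.card = k := by
      have : Multiset.card (u.map f) = k := by rw [hmap, hct₀]
      simpa [hSdef, Finset.card] using this
    have hS : S ∈ Finset.powersetCard k (Finset.univ : Finset (Fin q)) :=
      Finset.mem_powersetCard.mpr ⟨Finset.subset_univ _, hScard⟩
    have hsum : ∑ j ∈ S, f j = t₀.sum := by
      rw [← hmap, Finset.sum_eq_multiset_sum]
    have htsum : t₀.sum = (L.drop (q - k)).sum := by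
      rw [ht₀def, Multiset.sum_coe]
    rw [hsumTopK, ← htsum, ← hsum]
    exact Finset.le_sup' (fun S => ∑ j ∈ S, f j) hS
  · apply Finset.sup'_le
    intro S hS
    obtain ⟨-, hScard⟩ := Finset.mem_powersetCard.mp hS
    have h1 : Multiset.map f S.val ≤ s :=
      Multiset.map_le_map (Finset.val_le_iff.mpr (Finset.subset_univ S))
    have h2 := sum_le_drop_sum L (Multiset.pairwise_sort _ _) (Multiset.map f S.val)
      (by rwa [hLs])
    have hc : Multiset.card (Multiset.map f S.val) = k := by
      rw [Multiset.card_map]; exact hScard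
    rw [hc, hlen] at h2
    rw [hsumTopK]
    exact le_trans (le_of_eq rfl) h2

lemma convexOn_of_linear' {E : Type*} [AddCommGroup E] [Module ℝ E] {g : E → ℝ}
    (h : ∀ (a b : ℝ) (u v : E), g (a • u + b • v) = a * g u + b * g v) :
    ConvexOn ℝ Set.univ g :=
  ⟨convex_univ, fun u _ v _ a b _ _ _ => le_of_eq (by rw [h]; simp [smul_eq_mul])⟩

lemma convexOn_sup'' {ι E : Type*} [AddCommGroup E] [Module ℝ E] (f : ι → E → ℝ)
    (T : Finset ι) (hT : T.Nonempty) (hf : ∀ i ∈ T, ConvexOn ℝ Set.univ (f i)) :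
    ConvexOn ℝ Set.univ fun x => T.sup' hT fun i => f i x := by
  induction hT using Finset.Nonempty.cons_induction with
  | singleton a =>
    simp only [Finset.sup'_singleton]
    exact hf a (Finset.mem_singleton_self a)
  | cons a T h hT ih =>
    simp only [Finset.sup'_cons hT]
    exact (hf a (by simp)).sup (ih fun i hi => hf i (by simp [hi]))

lemma convexOn_finsum {ι E : Type*} [AddCommGroup E] [Module ℝ E] (f : ι → E → ℝ)
    (T : Finset ι) (hf : ∀ i ∈ T, ConvexOn ℝ Set.univ (f i)) :
    ConvexOn ℝ Set.univ fun x => ∑ i ∈ T, f i x := by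
  classical
  induction T using Finset.induction_on with
  | empty => simpa using convexOn_const (0 : ℝ) convex_univ
  | insert a T hni ih =>
    simp only [Finset.sum_insert hni]
    exact (hf a (by simp)).add (ih fun i hi => hf i (by simp [hi]))

lemma convexOn_norm_sq {E : Type*} [NormedAddCommGroup E] [NormedSpace ℝ E] :
    ConvexOn ℝ Set.univ fun w : E => ‖w‖ ^ 2 := by
  refine ⟨convex_univ, fun u _ v _ a b ha hb hab => ?_⟩
  have h1 : ‖a • u + b • v‖ ≤ a * ‖u‖ + b * ‖v‖ := by
    refine (norm_add_le _ _).trans ?_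
    rw [norm_smul, norm_smul, Real.norm_eq_abs, Real.norm_eq_abs,
      abs_of_nonneg ha, abs_of_nonneg hb]
  have h2 := (convexOn_pow (𝕜 := ℝ) 2).2 (Set.mem_Ici.mpr (norm_nonneg u))
    (Set.mem_Ici.mpr (norm_nonneg v)) ha hb hab
  simp only [smul_eq_mul] at h2 ⊢
  calc ‖a • u + b • v‖ ^ 2 ≤ (a * ‖u‖ + b * ‖v‖) ^ 2 := by
        apply pow_le_pow_left₀ (norm_nonneg _) h1
    _ ≤ a * ‖u‖ ^ 2 + b * ‖v‖ ^ 2 := h2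

lemma convexOn_comp_mono' {E : Type*} [AddCommGroup E] [Module ℝ E] {f : E → ℝ} {l : ℝ → ℝ}
    (hf : ConvexOn ℝ Set.univ f) (hl : ConvexOn ℝ Set.univ l) (hm : Monotone l) :
    ConvexOn ℝ Set.univ fun x => l (f x) :=
  ⟨convex_univ, fun u hu v hv a b ha hb hab =>
    le_trans (hm (hf.2 hu hv ha hb hab)) (hl.2 (Set.mem_univ _) (Set.mem_univ _) ha hb hab)⟩

/-- the TopPushK objective (surrogate false-negative rate with threshold equal
to the mean of the `k` largest negative scores, plus `l²` regularization) is convex in `w`. -/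
theorem toppushk_objective_convex {m p q : ℕ}
    (x : Fin p → EuclideanSpace ℝ (Fin m)) (y : Fin q → EuclideanSpace ℝ (Fin m))
    (l : ℝ → ℝ) (hl_conv : ConvexOn ℝ Set.univ l) (hl_nonneg : ∀ z, 0 ≤ l z)
    (hl_mono : Monotone l) (hl_zero : l 0 = 1)
    (lam : ℝ) (hlam : 0 ≤ lam)
    (k : ℕ) (hk1 : 1 ≤ k) (hkq : k ≤ q) :
    ConvexOn ℝ Set.univ (fun w : EuclideanSpace ℝ (Fin m) =>
      (1 / (p : ℝ)) * ∑ i,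
          l (meanTopK (Multiset.map (fun j => ⟪w, y j⟫_ℝ) Finset.univ.val) k - ⟪w, x i⟫_ℝ)
        + lam / 2 * ‖w‖ ^ 2) := by
  classical
  have hne : (Finset.powersetCard k (Finset.univ : Finset (Fin q))).Nonempty :=
    Finset.powersetCard_nonempty.mpr (by simpa using hkq)
  -- convexity of the threshold term
  have hF : ConvexOn ℝ Set.univ (fun w : EuclideanSpace ℝ (Fin m) =>
      meanTopK (Multiset.map (fun j => ⟪w, y j⟫_ℝ) Finset.univ.val) k) := by
    have heq : (fun w : EuclideanSpace ℝ (Fin m) =>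
        meanTopK (Multiset.map (fun j => ⟪w, y j⟫_ℝ) Finset.univ.val) k)
        = fun w => (k : ℝ)⁻¹ • ((Finset.powersetCard k (Finset.univ : Finset (Fin q))).sup' hne
            (fun S => ∑ j ∈ S, ⟪w, y j⟫_ℝ)) := by
      funext w
      rw [meanTopK, sumTopK_eq_sup' (fun j => ⟪w, y j⟫_ℝ) hkq hne, div_eq_inv_mul,
        smul_eq_mul]
    rw [heq]
    refine ConvexOn.smul (by positivity) ?_
    refine convexOn_sup'' (fun S w => ∑ j ∈ S, ⟪w, y j⟫_ℝ) _ hne fun S _ => ?_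
    refine convexOn_of_linear' fun a b u v => ?_
    simp only [inner_add_left, real_inner_smul_left, Finset.sum_add_distrib, Finset.mul_sum]
  -- convexity of each loss term
  have hterm : ∀ i : Fin p, ConvexOn ℝ Set.univ (fun w : EuclideanSpace ℝ (Fin m) =>
      l (meanTopK (Multiset.map (fun j => ⟪w, y j⟫_ℝ) Finset.univ.val) k - ⟪w, x i⟫_ℝ)) := by
    intro i
    refine convexOn_comp_mono' ?_ hl_conv hl_mono
    have hneg : ConvexOn ℝ Set.univ (fun w : EuclideanSpace ℝ (Fin m) => -⟪w, x i⟫_ℝ) := by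
      refine convexOn_of_linear' fun a b u v => ?_
      simp only [inner_add_left, real_inner_smul_left, neg_add, Finset.mul_sum]
      ring_nf
    have := hF.add hneg
    simpa [sub_eq_add_neg, Pi.add_def] using this
  have hsum : ConvexOn ℝ Set.univ (fun w : EuclideanSpace ℝ (Fin m) =>
      ∑ i, l (meanTopK (Multiset.map (fun j => ⟪w, y j⟫_ℝ) Finset.univ.val) k - ⟪w, x i⟫_ℝ)) :=
    convexOn_finsum _ Finset.univ fun i _ => hterm i
  have hA : ConvexOn ℝ Set.univ (fun w : EuclideanSpace ℝ (Fin m) =>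
      (1 / (p : ℝ)) * ∑ i,
        l (meanTopK (Multiset.map (fun j => ⟪w, y j⟫_ℝ) Finset.univ.val) k - ⟪w, x i⟫_ℝ)) := by
    have := hsum.smul (c := 1 / (p : ℝ)) (by positivity)
    simpa [smul_eq_mul] using this
  have hB : ConvexOn ℝ Set.univ (fun w : EuclideanSpace ℝ (Fin m) => lam / 2 * ‖w‖ ^ 2) := by
    have := (convexOn_norm_sq (E := EuclideanSpace ℝ (Fin m))).smul (c := lam / 2)
      (by positivity)
    simpa [smul_eq_mul] using this
  exact hA.add hB
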